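/- Let Z be a finite set, π_ref and π* probability distributions on Z with π_ref having full support and π*(z) = π_ref(z)·exp(Q(z)/β)/Z_β for Q : Z → ℝ, β > 0, Z_β = ∑_z π_ref(z)·exp(Q(z)/β). Define V := ∑_z π_ref(z)·Q(z) and for each action a ∈ Z the advantage A(a) := Q(a) − V. Then A(a) = β·(log(π*(a)/π_ref(a)) + D_KL(π_ref‖π*)), where D_KL(π_ref‖π*) = ∑_z π_ref(z)·log(π_ref(z)/π*(z)). -/

import Mathlib

theorem stmt_8 {Z : Type*} [Fintype Z]
    (πref : Z → ℝ) (hpos : ∀ z, 0 < πref z) (hsum : ∑ z, πref z = 1)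
    (Q : Z → ℝ) (β : ℝ) (hβ : 0 < β)
    (Zβ : ℝ) (hZβ : Zβ = ∑ z, πref z * Real.exp (Q z / β))
    (πstar : Z → ℝ)
    (hπstar : ∀ z, πstar z = πref z * Real.exp (Q z / β) / Zβ)
    (V : ℝ) (hV : V = ∑ z, πref z * Q z)
    (A : Z → ℝ) (hA : ∀ a, A a = Q a - V) :
    ∀ a, A a = β * (Real.log (πstar a / πref a) +
      ∑ z, πref z * Real.log (πref z / πstar z)) := by
  intro a
  have hne : Nonempty Z := by
    rcases isEmpty_or_nonempty Z with h | h
    · simp at hsum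
    · exact h
  have hZpos : 0 < Zβ := by
    rw [hZβ]
    apply Finset.sum_pos
    · intro z _
      have := hpos z
      positivity
    · exact Finset.univ_nonempty
  have hlog : ∀ z, Real.log (πstar z / πref z) = Q z / β - Real.log Zβ := by
    intro z
    have h1 : πstar z / πref z = Real.exp (Q z / β) / Zβ := by
      rw [hπstar z]
      field_simp [(hpos z).ne', hZpos.ne']
    rw [h1, Real.log_div (Real.exp_ne_zero _) hZpos.ne', Real.log_exp]
  have hlog2 : ∀ z, Real.log (πref z / πstar z) = Real.log Zβ - Q z / β := by
    intro z
    rw [show πref z / πstar z = (πstar z / πref z)⁻¹ by rw [inv_div],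
      Real.log_inv, hlog z]
    ring
  have hKL : ∑ z, πref z * Real.log (πref z / πstar z) = Real.log Zβ - V / β := by
    simp only [hlog2, mul_sub]
    rw [Finset.sum_sub_distrib, ← Finset.sum_mul, hsum, one_mul]
    congr 1
    rw [hV, Finset.sum_div]
    exact Finset.sum_congr rfl fun z _ => by ring
  rw [hA, hlog, hKL]
  field_simp
  ring
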